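/- Let G = (V,E) be a directed graph and S ⊆ V an SCC-closed set. For v ∈ S, the forward-reachable set of v within the induced subgraph on S, intersected with the backward-reachable set of v within S, equals SCC(G, v). -/

import Mathlib

theorem induced_fb_eq_scc {V : Type*} (E : V → V → Prop) (S : Set V)
    (hclosed : ∀ W : Set V,
      (∃ u, W = {w | Relation.ReflTransGen E u w ∧ Relation.ReflTransGen E w u}) →
      W ⊆ S ∨ W ∩ S = ∅)
    (v : V) (hv : v ∈ S) :
    {w | Relation.ReflTransGen (fun a b => E a b ∧ a ∈ S ∧ b ∈ S) v w} ∩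
    {w | Relation.ReflTransGen (fun a b => E a b ∧ a ∈ S ∧ b ∈ S) w v}
      = {w | Relation.ReflTransGen E v w ∧ Relation.ReflTransGen E w v} := by
  have hmono : ∀ a b, Relation.ReflTransGen (fun a b => E a b ∧ a ∈ S ∧ b ∈ S) a b →
      Relation.ReflTransGen E a b := fun a b h =>
    by induction h with
      | refl => exact Relation.ReflTransGen.refl
      | tail _ hbc ih => exact ih.tail hbc.1
  have hsub : {w | Relation.ReflTransGen E v w ∧ Relation.ReflTransGen E w v} ⊆ S := by
    rcases hclosed _ ⟨v, rfl⟩ with h | h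
    · exact h
    · exfalso
      have : v ∈ ({w | Relation.ReflTransGen E v w ∧ Relation.ReflTransGen E w v} : Set V) ∩ S :=
        ⟨⟨Relation.ReflTransGen.refl, Relation.ReflTransGen.refl⟩, hv⟩
      simp [h] at this
  have key : ∀ w, Relation.ReflTransGen E v w → Relation.ReflTransGen E w v →
      Relation.ReflTransGen (fun a b => E a b ∧ a ∈ S ∧ b ∈ S) v w := by
    intro w hvw
    induction hvw with
    | refl => intro _; exact Relation.ReflTransGen.refl
    | tail hvx hxw ih =>
      rename_i x w
      intro hwv
      have hxv : Relation.ReflTransGen E x v := Relation.ReflTransGen.head hxw hwv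
      have hx : x ∈ S := hsub ⟨hvx, hxv⟩
      have hw : w ∈ S := hsub ⟨hvx.tail hxw, hwv⟩
      exact (ih hxv).tail ⟨hxw, hx, hw⟩
  ext w
  constructor
  · rintro ⟨h1, h2⟩
    exact ⟨hmono _ _ h1, hmono _ _ h2⟩
  · rintro ⟨h1, h2⟩
    refine ⟨key w h1 h2, ?_⟩
    -- backward: induction on h2
    clear hmono
    have key2 : ∀ a, Relation.ReflTransGen E a v → Relation.ReflTransGen E v a →
        Relation.ReflTransGen (fun a b => E a b ∧ a ∈ S ∧ b ∈ S) a v := by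
      intro a hav
      induction hav using Relation.ReflTransGen.head_induction_on with
      | refl => intro _; exact Relation.ReflTransGen.refl
      | head hab hbv ih =>
        rename_i a b
        intro hva
        have hvb : Relation.ReflTransGen E v b := hva.tail hab
        have ha : a ∈ S := hsub ⟨hva, Relation.ReflTransGen.head hab hbv⟩
        have hb : b ∈ S := hsub ⟨hvb, hbv⟩
        exact Relation.ReflTransGen.head ⟨hab, ha, hb⟩ (ih hvb)
    exact key2 w h2 h1
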